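/- For every ε > 0 there exists a unit vector ξ ∈ ℓ²(F₂) such that |⟨λ_x(ξ), ξ⟩| > √3/2 − ε for each x ∈ {a, a⁻¹, b, b⁻¹}, where λ is the left regular representation of the free group F₂ = ⟨a,b⟩. -/

import Mathlib

open scoped ENNReal

theorem memℓp_comp_equiv {α β : Type*} (e : α ≃ β) (f : α → ℂ) (hf : Memℓp f 2) :
    Memℓp (fun b => f (e.symm b)) 2 := by
  rw [memℓp_gen_iff (by norm_num : 0 < (2:ℝ≥0∞).toReal)] at hf ⊢
  exact (e.symm.summable_iff (f := fun a => ‖f a‖ ^ (2:ℝ≥0∞).toReal)).2 hf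

/-- Reindexing of `ℓ²` along an equivalence of index sets, as a linear isometric
equivalence: `f ↦ f ∘ e.symm`. -/
noncomputable def lpCongr {α β : Type*} (e : α ≃ β) :
    lp (fun _ : α => ℂ) 2 ≃ₗᵢ[ℂ] lp (fun _ : β => ℂ) 2 where
  toLinearEquiv :=
    { toFun := fun f => ⟨fun b => f (e.symm b), memℓp_comp_equiv e f (lp.memℓp f)⟩
      invFun := fun g => ⟨fun a => g (e a), by
        have h := memℓp_comp_equiv e.symm (g : β → ℂ) (lp.memℓp g)
        simp only [Equiv.symm_symm] at h
        exact h⟩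
      map_add' := by intro f g; ext b; rfl
      map_smul' := by intro c f; ext b; rfl
      left_inv := by intro f; ext a; simp
      right_inv := by intro g; ext b; simp }
  norm_map' := by
    intro f
    have h2 : 0 < (2:ℝ≥0∞).toReal := by norm_num
    rw [lp.norm_eq_tsum_rpow h2, lp.norm_eq_tsum_rpow h2]
    congr 1
    exact e.symm.tsum_eq (f := fun a => ‖f a‖ ^ (2:ℝ≥0∞).toReal)

variable {Γ : Type*} [Group Γ]

/-- The left regular representation of a group `Γ` on `ℓ²(Γ)`:
`lam x` maps `δ_t` to `δ_{x t}`, i.e. `(lam x f) s = f (x⁻¹ * s)`. -/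
noncomputable def lam (x : Γ) :
    lp (fun _ : Γ => ℂ) 2 ≃ₗᵢ[ℂ] lp (fun _ : Γ => ℂ) 2 :=
  lpCongr (Equiv.mulLeft x)

/-- The left regular representation, as a continuous linear map on `ℓ²(Γ)`. -/
noncomputable def lamCLM (x : Γ) :
    lp (fun _ : Γ => ℂ) 2 →L[ℂ] lp (fun _ : Γ => ℂ) 2 :=
  ((lam x).toContinuousLinearEquiv : lp (fun _ : Γ => ℂ) 2 ≃L[ℂ] lp (fun _ : Γ => ℂ) 2)


namespace KestenAux
open FreeGroup

abbrev Lt := Fin 2 × Bool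
def invL (l : Lt) : Lt := (l.1, !l.2)
@[simp] lemma invL_invL (l : Lt) : invL (invL l) = l := by simp [invL]
def mkL (l : Lt) : FreeGroup (Fin 2) := FreeGroup.mk [l]
@[simp] lemma toWord_mkL (l : Lt) : (mkL l).toWord = [l] := by
  simp [mkL, toWord_mk, reduce_singleton]
lemma inv_mkL (l : Lt) : (mkL l)⁻¹ = mkL (invL l) := by
  simp [mkL, FreeGroup.inv_mk, FreeGroup.invRev, invL]
lemma of_eq_mkL (a : Fin 2) : FreeGroup.of a = mkL (a, true) := rfl
lemma inv_of_eq_mkL (a : Fin 2) : (FreeGroup.of a)⁻¹ = mkL (a, false) := by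
  rw [of_eq_mkL, inv_mkL]; rfl

lemma toWord_mkL_mul (l : Lt) (w : FreeGroup (Fin 2)) :
    (mkL l * w).toWord =
      match w.toWord with
      | [] => [l]
      | hd :: tl => if hd = invL l then tl else l :: hd :: tl := by
  conv_lhs => rw [← mk_toWord (x := w)]
  rw [mkL, FreeGroup.mul_mk, toWord_mk, show ([l] ++ w.toWord) = l :: w.toWord from rfl,
    reduce.cons, FreeGroup.reduce_toWord]
  cases h : w.toWord with
  | nil => rfl
  | cons hd tl =>
    simp only []
    congr 1
    show (l.1 = hd.1 ∧ l.2 = !hd.2) = (hd = invL l)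
    simp only [eq_iff_iff, Prod.ext_iff, invL]
    constructor
    · rintro ⟨h1, h2⟩; exact ⟨h1.symm, by simp [h2]⟩
    · rintro ⟨h1, h2⟩; exact ⟨h1.symm, by simp [h2]⟩

lemma no_cancel (w : FreeGroup (Fin 2)) (l : Lt) (tl : List Lt) :
    w.toWord ≠ l :: invL l :: tl := by
  intro h
  have h2 : FreeGroup.reduce (α := Fin 2) w.toWord = [] ++ (l.1, l.2) :: (l.1, !l.2) :: tl := by
    rw [FreeGroup.reduce_toWord]; simpa [invL] using h
  exact FreeGroup.reduce.not h2

lemma toWord_mul_cancel {l : Lt} {w : FreeGroup (Fin 2)}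
    (h : w.toWord.head? = some (invL l)) : (mkL l * w).toWord = w.toWord.tail := by
  rw [toWord_mkL_mul]
  cases hw : w.toWord with
  | nil => simp [hw] at h
  | cons hd tl => rw [hw] at h; simp only [List.head?_cons, Option.some_inj] at h; simp [h]

lemma toWord_mul_extend {l : Lt} {w : FreeGroup (Fin 2)}
    (h : w.toWord.head? ≠ some (invL l)) : (mkL l * w).toWord = l :: w.toWord := by
  rw [toWord_mkL_mul]
  cases hw : w.toWord with
  | nil => rfl
  | cons hd tl =>
    rw [hw] at h; simp only [List.head?_cons, ne_eq, Option.some_inj] at h; simp [h]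

/-- The sphere of radius `i` in `F₂`, as a `Finset`. -/
def S (i : ℕ) : Finset (FreeGroup (Fin 2)) :=
  ((Finset.univ : Finset (List.Vector Lt i)).image fun v => FreeGroup.mk v.toList).filter
    fun w => w.norm = i

lemma mem_S {w : FreeGroup (Fin 2)} {i : ℕ} : w ∈ S i ↔ w.norm = i := by
  constructor
  · exact fun h => (Finset.mem_filter.1 h).2
  · intro h
    refine Finset.mem_filter.2 ⟨Finset.mem_image.2 ⟨⟨w.toWord, h⟩, Finset.mem_univ _, ?_⟩, h⟩
    exact mk_toWord

/-- Elements of the sphere of radius `i` whose reduced word starts with the letter `l`. -/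
def T (l : Lt) (i : ℕ) : Finset (FreeGroup (Fin 2)) :=
  (S i).filter fun w => w.toWord.head? = some l

lemma mem_T {l : Lt} {w : FreeGroup (Fin 2)} {i : ℕ} :
    w ∈ T l i ↔ w.norm = i ∧ w.toWord.head? = some l := by
  simp [T, Finset.mem_filter, mem_S]

lemma T_zero (l : Lt) : T l 0 = ∅ := by
  ext w
  simp only [mem_T, Finset.notMem_empty, iff_false, not_and]
  intro h
  rw [FreeGroup.norm_eq_zero] at h
  simp [h, toWord_one]

lemma S_zero : S 0 = {1} := by
  ext w; simp [mem_S, FreeGroup.norm_eq_zero]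

lemma T_succ (l : Lt) (i : ℕ) :
    T l (i + 1) = ((S i).filter fun w => w.toWord.head? ≠ some (invL l)).image
      fun w => mkL l * w := by
  ext u
  simp only [Finset.mem_image, Finset.mem_filter, mem_S, mem_T]
  constructor
  · rintro ⟨hn, hh⟩
    refine ⟨mkL (invL l) * u, ⟨?_, ?_⟩, ?_⟩
    · have : (mkL (invL l) * u).toWord = u.toWord.tail :=
        toWord_mul_cancel (by simpa using hh)
      simp only [FreeGroup.norm, this]
      rw [List.length_tail]
      simp [FreeGroup.norm] at hn
      omega
    · have ht : (mkL (invL l) * u).toWord = u.toWord.tail :=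
        toWord_mul_cancel (by simpa using hh)
      rw [ht]
      intro hcon
      obtain ⟨tl', htl⟩ : ∃ tl', u.toWord.tail = invL l :: tl' := by
        cases h : u.toWord.tail with
        | nil => rw [h] at hcon; simp at hcon
        | cons a b => rw [h] at hcon; simp only [List.head?_cons, Option.some_inj] at hcon;
                      exact ⟨b, by rw [hcon]⟩
      have hu : u.toWord = l :: invL l :: tl' := by
        cases h : u.toWord with
        | nil => simp [h] at hh
        | cons a b =>
          rw [h] at hh htl; simp only [List.head?_cons, Option.some_inj] at hh
          simp only [List.tail_cons] at htl
          rw [hh, htl]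
      exact no_cancel u l tl' hu
    · rw [← mul_assoc, mkL, mkL, FreeGroup.mul_mk]
      have : FreeGroup.mk ([l] ++ [invL l]) = 1 := by
        rw [← FreeGroup.reduce.self (L := [l] ++ [invL l])]
        have : FreeGroup.reduce (α := Fin 2) [l, invL l] = [] := by
          simp [FreeGroup.reduce, invL]
        rw [show ([l] ++ [invL l]) = [l, invL l] from rfl, this]; rfl
      rw [this, one_mul]
  · rintro ⟨w, ⟨hn, hh⟩, rfl⟩
    have ht : (mkL l * w).toWord = l :: w.toWord := toWord_mul_extend hh
    constructor
    · simp only [FreeGroup.norm, ht, List.length_cons]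
      simp only [FreeGroup.norm] at hn; omega
    · rw [ht]; rfl

lemma card_T_succ (l : Lt) (i : ℕ) :
    (T l (i + 1)).card = (S i).card - (T (invL l) i).card := by
  rw [T_succ, Finset.card_image_of_injective _ (mul_right_injective (mkL l))]
  have := Finset.card_filter_add_card_filter_not
    (s := S i) (p := fun w => w.toWord.head? = some (invL l))
  simp only [ne_eq] at *
  have hT : (T (invL l) i).card
      = ((S i).filter fun w => w.toWord.head? = some (invL l)).card := rfl
  omega

lemma card_S_succ_eq_sum (i : ℕ) : (S (i + 1)).card = ∑ l : Lt, (T l (i + 1)).card := by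
  rw [Finset.card_eq_sum_card_fiberwise
    (f := fun w => w.toWord.headI) (t := Finset.univ) (fun _ _ => Finset.mem_univ _)]
  refine Finset.sum_congr rfl fun l _ => ?_
  congr 1
  apply Finset.filter_congr
  intro w hw
  have hne : w.toWord ≠ [] := by
    intro h
    have := (mem_S.1 hw)
    simp [FreeGroup.norm, h] at this
  cases h : w.toWord with
  | nil => exact absurd h hne
  | cons a b => simp

lemma card_T_pow : ∀ i : ℕ, ∀ l : Lt, (T l (i + 1)).card = 3 ^ i := by
  intro i
  induction i with
  | zero =>
    intro l
    rw [card_T_succ, T_zero, S_zero]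
    simp
  | succ i ih =>
    intro l
    have hS : (S (i + 1)).card = 4 * 3 ^ i := by
      rw [card_S_succ_eq_sum]
      rw [Finset.sum_congr rfl fun l _ => ih l]
      simp [Finset.card_univ]
    rw [card_T_succ, hS, ih]
    ring_nf
    omega

lemma card_S_pow (i : ℕ) : (S (i + 1)).card = 4 * 3 ^ i := by
  rw [card_S_succ_eq_sum, Finset.sum_congr rfl fun l _ => card_T_pow i l]
  simp [Finset.card_univ]

variable (n : ℕ)

/-- radial weight -/
noncomputable def g : ℕ → ℝ := fun i =>
  if 1 ≤ i ∧ i ≤ n then (2 * Real.sqrt n * Real.sqrt 3 ^ (i - 1))⁻¹ else 0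

lemma g_zero : g n 0 = 0 := by simp [g]

lemma g_of_gt {i : ℕ} (h : n < i) : g n i = 0 := by
  simp only [g, ite_eq_right_iff]; intro hc; omega

lemma sq3 : Real.sqrt 3 * Real.sqrt 3 = 3 := Real.mul_self_sqrt (by norm_num)
lemma e3 (j : ℕ) : Real.sqrt 3 ^ j * Real.sqrt 3 ^ j = 3 ^ j := by
  rw [← mul_pow, sq3]
lemma sqn : Real.sqrt n * Real.sqrt n = n := Real.mul_self_sqrt (Nat.cast_nonneg n)

lemma npos (hn : 1 ≤ n) : (0:ℝ) < n := by exact_mod_cast Nat.pos_of_ne_zero (by omega)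

lemma termNorm {j : ℕ} (hj : j + 1 ≤ n) :
    (4 * 3 ^ j : ℝ) * (g n (j + 1) * g n (j + 1)) = 1 / n := by
  have hg : g n (j + 1) = (2 * Real.sqrt n * Real.sqrt 3 ^ j)⁻¹ := by
    simp only [g, if_pos (⟨Nat.le_add_left 1 j, hj⟩ : 1 ≤ j + 1 ∧ j + 1 ≤ n),
      Nat.add_sub_cancel]
  have key : (2 * Real.sqrt n * Real.sqrt 3 ^ j) * (2 * Real.sqrt n * Real.sqrt 3 ^ j)
      = 4 * n * 3 ^ j := by
    calc (2 * Real.sqrt n * Real.sqrt 3 ^ j) * (2 * Real.sqrt n * Real.sqrt 3 ^ j)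
        = 4 * (Real.sqrt n * Real.sqrt n) * (Real.sqrt 3 ^ j * Real.sqrt 3 ^ j) := by ring
      _ = 4 * n * 3 ^ j := by rw [sqn, e3]
  rw [hg, ← mul_inv, key]
  have hn0 : (0:ℝ) < n := npos n (by omega)
  field_simp

lemma termQ {k : ℕ} (hk : k + 2 ≤ n) :
    (3 ^ (k + 1) : ℝ) * (g n (k + 1) * g n (k + 2)) = Real.sqrt 3 / (4 * n) := by
  have hg1 : g n (k + 1) = (2 * Real.sqrt n * Real.sqrt 3 ^ k)⁻¹ := by
    simp only [g, if_pos (⟨Nat.le_add_left 1 k, by omega⟩ : 1 ≤ k + 1 ∧ k + 1 ≤ n),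
      Nat.add_sub_cancel]
  have hg2 : g n (k + 2) = (2 * Real.sqrt n * Real.sqrt 3 ^ (k + 1))⁻¹ := by
    simp only [g, if_pos (⟨Nat.le_add_left 1 (k+1), hk⟩ : 1 ≤ k + 2 ∧ k + 2 ≤ n)]
    norm_num
  have key : (2 * Real.sqrt n * Real.sqrt 3 ^ k) * (2 * Real.sqrt n * Real.sqrt 3 ^ (k + 1))
      = 4 * n * (3 ^ k * Real.sqrt 3) := by
    calc (2 * Real.sqrt n * Real.sqrt 3 ^ k) * (2 * Real.sqrt n * Real.sqrt 3 ^ (k + 1))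
        = 4 * (Real.sqrt n * Real.sqrt n) * ((Real.sqrt 3 ^ k * Real.sqrt 3 ^ k)
            * Real.sqrt 3) := by ring
      _ = 4 * n * (3 ^ k * Real.sqrt 3) := by rw [sqn, e3]
  rw [hg1, hg2, ← mul_inv, key]
  have hn0 : (0:ℝ) < n := npos n (by omega)
  have h3 : (0:ℝ) < Real.sqrt 3 := Real.sqrt_pos.2 (by norm_num)
  rw [inv_eq_one_div, mul_div_assoc', div_eq_div_iff (by positivity) (by positivity)]
  have : (3:ℝ) ^ (k+1) = 3 ^ k * (Real.sqrt 3 * Real.sqrt 3) := by rw [sq3, pow_succ]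
  rw [this]; ring

/-- The ball of radius `n` as a `Finset`. -/
def B : Finset (FreeGroup (Fin 2)) := (Finset.range (n + 1)).biUnion S

lemma mem_B {w : FreeGroup (Fin 2)} : w ∈ B n ↔ w.norm ≤ n := by
  simp only [B, Finset.mem_biUnion, Finset.mem_range, mem_S]
  constructor
  · rintro ⟨i, hi, rfl⟩; omega
  · intro h; exact ⟨w.norm, by omega, rfl⟩

lemma S_pairwise : (↑(Finset.range (n + 1)) : Set ℕ).PairwiseDisjoint S := by
  intro i _ j _ hij
  simp only [Finset.disjoint_left]
  intro w hwi hwj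
  exact hij ((mem_S.1 hwi).symm.trans (mem_S.1 hwj))

lemma sum_split (F : FreeGroup (Fin 2) → ℂ) (hF : ∀ w ∉ B n, F w = 0) :
    ∑' w, F w = ∑ i ∈ Finset.range (n + 1), ∑ w ∈ S i, F w := by
  rw [tsum_eq_sum (s := B n) hF, B, Finset.sum_biUnion (S_pairwise n)]

lemma sum_ite_card {N a b : ℕ} (q : ℝ) (hb : b ≤ N) :
    ∑ i ∈ Finset.range (N + 1), (if a ≤ i ∧ i ≤ b then q else 0)
      = (b + 1 - a : ℕ) * q := by
  rw [← Finset.sum_filter]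
  have : (Finset.range (N + 1)).filter (fun i => a ≤ i ∧ i ≤ b) = Finset.Icc a b := by
    ext i; simp only [Finset.mem_filter, Finset.mem_range, Finset.mem_Icc]; omega
  rw [this, Finset.sum_const, Nat.card_Icc, nsmul_eq_mul]

end KestenAux

namespace KestenAux
open FreeGroup
variable (n : ℕ)

lemma sphere_sum_norm (i : ℕ) (hi : i ≤ n) :
    ∑ w ∈ S i, g n w.norm * g n w.norm = if 1 ≤ i ∧ i ≤ n then 1 / (n:ℝ) else 0 := by
  have hcongr : ∑ w ∈ S i, g n w.norm * g n w.norm = ((S i).card : ℝ) * (g n i * g n i) := by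
    rw [Finset.sum_congr rfl (fun w hw => by rw [mem_S.1 hw]), Finset.sum_const, nsmul_eq_mul]
  rw [hcongr]
  cases i with
  | zero => simp [g_zero]
  | succ j =>
    rw [if_pos ⟨by omega, hi⟩, card_S_pow]
    push_cast
    exact termNorm n hi

lemma sphere_sum_inner (l : Lt) (hn : 1 ≤ n) (i : ℕ) (hi : i ≤ n) :
    ∑ w ∈ S i, g n (mkL (invL l) * w).norm * g n w.norm
      = (if 2 ≤ i ∧ i ≤ n then Real.sqrt 3 / (4 * n) else 0)
        + (if 1 ≤ i ∧ i ≤ n - 1 then Real.sqrt 3 / (4 * n) else 0) := by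
  cases i with
  | zero =>
    rw [S_zero]
    simp [FreeGroup.norm_one, g_zero]
  | succ j =>
    rw [← Finset.sum_filter_add_sum_filter_not (S (j+1)) (fun w => w.toWord.head? = some l)]
    have h1 : ∀ w ∈ (S (j+1)).filter (fun w => w.toWord.head? = some l),
        g n (mkL (invL l) * w).norm * g n w.norm = g n j * g n (j + 1) := by
      intro w hw
      obtain ⟨hw1, hw2⟩ := Finset.mem_filter.1 hw
      have hnw := mem_S.1 hw1
      have ht : (mkL (invL l) * w).toWord = w.toWord.tail :=
        toWord_mul_cancel (by simpa using hw2)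
      have hh : (mkL (invL l) * w).norm = j := by
        simp only [FreeGroup.norm, ht, List.length_tail]
        simp only [FreeGroup.norm] at hnw; omega
      rw [hh, hnw]
    have h2 : ∀ w ∈ (S (j+1)).filter (fun w => ¬ w.toWord.head? = some l),
        g n (mkL (invL l) * w).norm * g n w.norm = g n (j + 2) * g n (j + 1) := by
      intro w hw
      obtain ⟨hw1, hw2⟩ := Finset.mem_filter.1 hw
      have hnw := mem_S.1 hw1
      have ht : (mkL (invL l) * w).toWord = invL l :: w.toWord :=
        toWord_mul_extend (by simpa using hw2)
      have hh : (mkL (invL l) * w).norm = j + 2 := by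
        simp only [FreeGroup.norm, ht, List.length_cons]
        simp only [FreeGroup.norm] at hnw; omega
      rw [hh, hnw]
    rw [Finset.sum_congr rfl h1, Finset.sum_congr rfl h2, Finset.sum_const, Finset.sum_const]
    have hc1 : ((S (j+1)).filter (fun w => w.toWord.head? = some l)).card = 3 ^ j :=
      card_T_pow j l
    have hc2 : ((S (j+1)).filter (fun w => ¬ w.toWord.head? = some l)).card = 3 * 3 ^ j := by
      have := Finset.card_filter_add_card_filter_not
        (s := S (j+1)) (p := fun w => w.toWord.head? = some l)
      have hS := card_S_pow j
      omega
    rw [hc1, hc2, nsmul_eq_mul, nsmul_eq_mul]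
    congr 1
    · -- first term
      cases j with
      | zero => simp [g_zero]
      | succ k =>
        rw [if_pos ⟨by omega, hi⟩]
        have := termQ n (k := k) (by omega)
        push_cast
        convert this using 2
    · -- second term
      by_cases h : j + 2 ≤ n
      · rw [if_pos ⟨by omega, by omega⟩]
        have := termQ n (k := j) h
        rw [← this]
        push_cast
        ring
      · rw [if_neg (by omega), g_of_gt n (i := j + 2) (by omega)]
        ring

end KestenAux

namespace KestenAux
open FreeGroup
variable (n : ℕ)

noncomputable def c : FreeGroup (Fin 2) → ℂ := fun w => ((g n w.norm : ℝ) : ℂ)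

lemma c_zero {w : FreeGroup (Fin 2)} (h : w ∉ B n) : c n w = 0 := by
  have : n < w.norm := by simpa [mem_B, not_le] using h
  simp [c, g_of_gt n this]

lemma memc : Memℓp (c n) 2 := by
  rw [memℓp_gen_iff (by norm_num : 0 < (2:ℝ≥0∞).toReal)]
  apply summable_of_ne_finset_zero (s := B n)
  intro w hw
  rw [c_zero n hw]
  simp [Real.zero_rpow]

noncomputable def xi : lp (fun _ : FreeGroup (Fin 2) => ℂ) 2 := ⟨c n, memc n⟩

lemma inner_lp {ι : Type*} (f h : lp (fun _ : ι => ℂ) 2) :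
    (inner ℂ f h : ℂ) = ∑' w, (starRingEnd ℂ) (f w) * h w := by
  rw [lp.inner_eq_tsum]; congr 1; ext w; rw [RCLike.inner_apply]; ring

lemma xi_apply (w : FreeGroup (Fin 2)) : (xi n : FreeGroup (Fin 2) → ℂ) w = c n w := rfl

lemma inner_self (hn : 1 ≤ n) : (inner ℂ (xi n) (xi n) : ℂ) = 1 := by
  rw [inner_lp]
  have hsummand : ∀ w, (starRingEnd ℂ) ((xi n : FreeGroup (Fin 2) → ℂ) w)
      * (xi n : FreeGroup (Fin 2) → ℂ) w = ((g n w.norm * g n w.norm : ℝ) : ℂ) := by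
    intro w
    rw [xi_apply]
    simp [c, Complex.conj_ofReal, Complex.ofReal_mul]
  rw [tsum_congr hsummand, sum_split n _ (fun w hw => by
    have : n < w.norm := by simpa [mem_B, not_le] using hw
    rw [g_of_gt n this]; simp)]
  have hterm : ∀ i ∈ Finset.range (n + 1),
      ∑ w ∈ S i, ((g n w.norm * g n w.norm : ℝ) : ℂ)
        = (((if 1 ≤ i ∧ i ≤ n then 1 / (n:ℝ) else 0) : ℝ) : ℂ) := by
    intro i hi
    rw [← Complex.ofReal_sum, sphere_sum_norm n i (by simp only [Finset.mem_range] at hi; omega)]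
  rw [Finset.sum_congr rfl hterm, ← Complex.ofReal_sum,
    sum_ite_card (N := n) (a := 1) (b := n) _ le_rfl]
  have hn0 : (n:ℝ) ≠ 0 := ne_of_gt (npos n hn)
  rw [Nat.add_sub_cancel]
  rw [show ((n:ℝ) * (1 / (n:ℝ)) : ℝ) = 1 from by field_simp]
  norm_num

lemma xi_norm_one (hn : 1 ≤ n) : ‖xi n‖ = 1 := by
  have h2 := inner_self_eq_norm_sq_to_K (𝕜 := ℂ) (xi n)
  rw [inner_self n hn] at h2
  have h4 : ((‖xi n‖ ^ 2 : ℝ) : ℂ) = ((1:ℝ) : ℂ) := by push_cast; exact h2.symm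
  have h3 := Complex.ofReal_injective h4
  nlinarith [norm_nonneg (xi n)]

lemma lam_apply (x : FreeGroup (Fin 2)) (w : FreeGroup (Fin 2)) :
    ((lam x (xi n)) : FreeGroup (Fin 2) → ℂ) w = c n (x⁻¹ * w) := rfl

lemma inner_lam (l : Lt) (hn : 1 ≤ n) :
    (inner ℂ ((lam (mkL l)) (xi n)) (xi n) : ℂ)
      = ((Real.sqrt 3 * ((n:ℝ) - 1) / (2 * n) : ℝ) : ℂ) := by
  rw [inner_lp]
  have hsummand : ∀ w, (starRingEnd ℂ) ((lam (mkL l) (xi n) : FreeGroup (Fin 2) → ℂ) w)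
      * (xi n : FreeGroup (Fin 2) → ℂ) w
      = ((g n (mkL (invL l) * w).norm * g n w.norm : ℝ) : ℂ) := by
    intro w
    rw [lam_apply, xi_apply, inv_mkL]
    simp [c, Complex.conj_ofReal, Complex.ofReal_mul]
  rw [tsum_congr hsummand, sum_split n _ (fun w hw => by
    have : n < w.norm := by simpa [mem_B, not_le] using hw
    rw [g_of_gt n this]; simp)]
  have hterm : ∀ i ∈ Finset.range (n + 1),
      ∑ w ∈ S i, ((g n (mkL (invL l) * w).norm * g n w.norm : ℝ) : ℂ)
        = ((((if 2 ≤ i ∧ i ≤ n then Real.sqrt 3 / (4 * n) else 0)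
            + (if 1 ≤ i ∧ i ≤ n - 1 then Real.sqrt 3 / (4 * n) else 0)) : ℝ) : ℂ) := by
    intro i hi
    rw [← Complex.ofReal_sum,
      sphere_sum_inner n l hn i (by simp only [Finset.mem_range] at hi; omega)]
  rw [Finset.sum_congr rfl hterm, ← Complex.ofReal_sum]
  congr 1
  rw [Finset.sum_add_distrib,
    sum_ite_card (N := n) (a := 2) (b := n) _ le_rfl,
    sum_ite_card (N := n) (a := 1) (b := n - 1) _ (by omega)]
  have hn0 : (n:ℝ) ≠ 0 := ne_of_gt (npos n hn)
  have hcast : ((n - 1 : ℕ) : ℝ) = (n:ℝ) - 1 := by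
    rw [Nat.cast_sub hn]; norm_num
  rw [show n + 1 - 2 = n - 1 from by omega, show n - 1 + 1 - 1 = n - 1 from by omega, hcast]
  field_simp
  ring

end KestenAux

/-- For every `ε > 0` there is a unit vector `ξ ∈ ℓ²(F₂)` such that
`|⟨λ_x ξ, ξ⟩| > √3/2 − ε` for each `x ∈ {a, a⁻¹, b, b⁻¹}`, where `λ` is the left
regular representation of the free group `F₂ = ⟨a, b⟩`. -/
theorem exists_unit_vector_almost_invariant_freeGroup (ε : ℝ) (hε : 0 < ε) :
    ∃ ξ : lp (fun _ : FreeGroup (Fin 2) => ℂ) 2, ‖ξ‖ = 1 ∧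
      ∀ x ∈ ({FreeGroup.of 0, (FreeGroup.of 0)⁻¹,
              FreeGroup.of 1, (FreeGroup.of 1)⁻¹} : Set (FreeGroup (Fin 2))),
        Real.sqrt 3 / 2 - ε < ‖(inner ℂ ((lam x) ξ) ξ : ℂ)‖ := by
  obtain ⟨m, hm⟩ := exists_nat_gt (Real.sqrt 3 / (2 * ε))
  set n := m + 1 with hn_def
  have hn : 1 ≤ n := Nat.le_add_left 1 m
  refine ⟨KestenAux.xi n, KestenAux.xi_norm_one n hn, ?_⟩
  have key : ∀ l : KestenAux.Lt, Real.sqrt 3 / 2 - ε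
      < ‖(inner ℂ ((lam (KestenAux.mkL l)) (KestenAux.xi n)) (KestenAux.xi n) : ℂ)‖ := by
    intro l
    rw [KestenAux.inner_lam n l hn, Complex.norm_real, Real.norm_eq_abs]
    have hq : (0:ℝ) < n := KestenAux.npos n hn
    have h1n : (1:ℝ) ≤ n := by exact_mod_cast hn
    have h3 : (0:ℝ) ≤ Real.sqrt 3 := Real.sqrt_nonneg 3
    have habs : |Real.sqrt 3 * ((n:ℝ) - 1) / (2 * n)| = Real.sqrt 3 * ((n:ℝ) - 1) / (2 * n) :=
      abs_of_nonneg (by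
        apply div_nonneg (mul_nonneg h3 (by linarith)) (by linarith))
    rw [habs, show Real.sqrt 3 * ((n:ℝ) - 1) / (2 * n)
        = Real.sqrt 3 / 2 - Real.sqrt 3 / (2 * n) from by field_simp]
    have hlt : Real.sqrt 3 / (2 * n) < ε := by
      rw [div_lt_iff₀ (by positivity)]
      have hmn : Real.sqrt 3 / (2 * ε) < (n:ℝ) := by
        refine lt_of_lt_of_le hm ?_
        exact_mod_cast Nat.le_succ m
      rw [div_lt_iff₀ (by positivity)] at hmn
      nlinarith
    linarith
  intro x hx
  simp only [Set.mem_insert_iff, Set.mem_singleton_iff] at hx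
  rcases hx with rfl | rfl | rfl | rfl
  · rw [KestenAux.of_eq_mkL]; exact key _
  · rw [KestenAux.inv_of_eq_mkL]; exact key _
  · rw [KestenAux.of_eq_mkL]; exact key _
  · rw [KestenAux.inv_of_eq_mkL]; exact key _
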